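/- arXiv:2010.05561 — 2 statements merged into one kernel-verified Lean document; each statement's English description precedes it below -/
import Mathlib

section
/- Let 0 < α < d and suppose the uncentered fractional maximal function M_α f is differentiable at x. If B = B(z,r) is a ball with x ∈ closure(B) and M_α f(x) = r^α f_B, then |∇ M_α f(x)| ≤ (d-α) r^{α-1} f_B. Moreover, if x lies in the open ball B, then ∇ M_α f(x) = 0. -/
open MeasureTheory Metric Set Filter Topology
open scoped Topology
open scoped ENNReal NNReal

noncomputable section

abbrev Euc (d : ℕ) : Type := EuclideanSpace ℝ (Fin d)

def setAvg {d : ℕ} (s : Set (Euc d)) (f : Euc d → ℝ) : ℝ :=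
  (volume s).toReal⁻¹ * ∫ y in s, f y

/-- The uncentered fractional Hardy–Littlewood maximal function. -/
def Mu (d : ℕ) (α : ℝ) (f : Euc d → ℝ) (x : Euc d) : ℝ :=
  sSup {v | ∃ z : Euc d, ∃ r : ℝ, 0 < r ∧ x ∈ ball z r ∧ v = r ^ α * setAvg (ball z r) f}

/-- tangent line inequality for rpow with nonpositive exponent -/
lemma rpow_tangent {a h p : ℝ} (ha : 0 < a) (hh : 0 ≤ h) (hp : p ≤ 0) :
    a ^ p + p * a ^ (p - 1) * h ≤ (a + h) ^ p := by
  have hah : 0 < a + h := by linarith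
  have h1 : (a + h) ^ p = a ^ p * (1 + h / a) ^ p := by
    rw [← Real.mul_rpow ha.le (by positivity)]
    congr 1
    field_simp
  have h2 : (1 : ℝ) + p * (h / a) ≤ (1 + h / a) ^ p := by
    have hpos : (0:ℝ) < 1 + h / a := by positivity
    rw [Real.rpow_def_of_pos hpos]
    calc (1 : ℝ) + p * (h / a) ≤ 1 + p * Real.log (1 + h / a) := by
          have hlog : Real.log (1 + h / a) ≤ h / a := by
            have := Real.log_le_sub_one_of_pos hpos
            linarith
          nlinarith [mul_le_mul_of_nonpos_left hlog hp]
      _ ≤ Real.exp (Real.log (1 + h / a) * p) := by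
          have := Real.add_one_le_exp (p * Real.log (1 + h / a))
          rw [mul_comm (Real.log (1 + h / a)) p]; linarith
  calc a ^ p + p * a ^ (p - 1) * h = a ^ p * (1 + p * (h / a)) := by
        rw [Real.rpow_sub ha, Real.rpow_one]
        field_simp
    _ ≤ a ^ p * (1 + h / a) ^ p := by
        apply mul_le_mul_of_nonneg_left h2 (Real.rpow_nonneg ha.le p)
    _ = (a + h) ^ p := h1.symm

lemma setAvg_nonneg {d : ℕ} {s : Set (Euc d)} {f : Euc d → ℝ} (hf : 0 ≤ f) :
    0 ≤ setAvg s f :=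
  mul_nonneg (inv_nonneg.mpr ENNReal.toReal_nonneg) (integral_nonneg fun y => hf y)

lemma Mu_nonneg (d : ℕ) (α : ℝ) (f : Euc d → ℝ) (hf : 0 ≤ f) (y : Euc d) :
    0 ≤ Mu d α f y := by
  apply Real.sSup_nonneg
  rintro v ⟨z, r, hr, -, rfl⟩
  exact mul_nonneg (Real.rpow_nonneg hr.le α) (setAvg_nonneg hf)

lemma le_Mu {d : ℕ} {α : ℝ} {f : Euc d → ℝ} {y : Euc d} (hpos : 0 < Mu d α f y)
    {z : Euc d} {r : ℝ} (hr : 0 < r) (hy : y ∈ ball z r) :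
    r ^ α * setAvg (ball z r) f ≤ Mu d α f y := by
  have hb : BddAbove {v | ∃ z : Euc d, ∃ r : ℝ, 0 < r ∧ y ∈ ball z r ∧
      v = r ^ α * setAvg (ball z r) f} := by
    by_contra hb
    rw [Mu, Real.sSup_of_not_bddAbove hb] at hpos
    exact lt_irrefl 0 hpos
  exact le_csSup hb ⟨z, r, hr, hy, rfl⟩

theorem stmt5 (d : ℕ) (α : ℝ) (hα : 0 < α) (hαd : α < d)
    (f : Euc d → ℝ) (hf : 0 ≤ f) (hloc : MeasureTheory.LocallyIntegrable f volume)
    (x z : Euc d) (r : ℝ) (hr : 0 < r)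
    (L : Euc d →L[ℝ] ℝ) (hdiff : HasFDerivAt (Mu d α f) L x)
    (hx : x ∈ closure (ball z r))
    (hmax : Mu d α f x = r ^ α * setAvg (ball z r) f) :
    ‖L‖ ≤ (d - α) * r ^ (α - 1) * setAvg (ball z r) f ∧ (x ∈ ball z r → L = 0) := by
  have hd0 : (0:ℝ) < d := hα.trans hαd
  have hdnat : 0 < d := by exact_mod_cast hd0
  haveI : Nonempty (Fin d) := ⟨⟨0, hdnat⟩⟩
  haveI : Nontrivial (Euc d) := ⟨⟨EuclideanSpace.single ⟨0, hdnat⟩ (1:ℝ), 0, by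
    intro hcon
    have := congrArg (fun v => v ⟨0, hdnat⟩) hcon
    simpa using this⟩⟩
  set F := setAvg (ball z r) f with hFdef
  have hF0 : 0 ≤ F := setAvg_nonneg hf
  set C := ((d:ℝ) - α) * r ^ (α - 1) * F with hCdef
  have hC0 : 0 ≤ C :=
    mul_nonneg (mul_nonneg (by linarith) (Real.rpow_nonneg hr.le _)) hF0
  rcases eq_or_lt_of_le hF0 with hFz | hFpos
  · have hx0 : Mu d α f x = 0 := by rw [hmax, ← hFz, mul_zero]
    have hmin : IsLocalMin (Mu d α f) x :=
      Filter.Eventually.of_forall (fun y => by rw [hx0]; exact Mu_nonneg d α f hf y)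
    have hL0 : L = 0 := hmin.hasFDerivAt_eq_zero hdiff
    exact ⟨by rw [hL0]; simpa using hC0, fun _ => hL0⟩
  · have hMux : 0 < Mu d α f x := by
      rw [hmax]; exact mul_pos (Real.rpow_pos_of_pos hr α) hFpos
    obtain ⟨ε, hε, hnb⟩ : ∃ ε > 0, ∀ y : Euc d, dist y x < ε → 0 < Mu d α f y := by
      have hcont := hdiff.continuousAt
      have h2 : ∀ᶠ y in 𝓝 x, 0 < Mu d α f y :=
        hcont.eventually_mem (isOpen_Ioi.mem_nhds (show Mu d α f x ∈ Ioi 0 from hMux))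
      rcases Metric.eventually_nhds_iff.mp h2 with ⟨ε, hε, hball⟩
      exact ⟨ε, hε, fun y hy => hball hy⟩
    -- volume of balls
    set c : ℝ := (volume (ball (0:Euc d) 1)).toReal with hcdef
    have hcpos : 0 < c := by
      apply ENNReal.toReal_pos (measure_ball_pos volume 0 one_pos).ne'
      exact (measure_ball_lt_top).ne
    have hvol : ∀ (w : Euc d) (t : ℝ), 0 < t →
        (volume (ball w t)).toReal = t ^ d * c := by
      intro w t ht
      rw [Measure.addHaar_ball volume w ht.le, ENNReal.toReal_mul,
        ENNReal.toReal_ofReal (by positivity), finrank_euclideanSpace_fin]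
    have hxz : dist x z ≤ r := by
      have := (closure_ball z hr.ne') ▸ hx
      exact mem_closedBall.mp this
    have key : ∀ e : Euc d, ‖e‖ = 1 → ∀ h : ℝ, 0 < h → h < ε →
        Mu d α f x - C * h ≤ Mu d α f (x + h • e) := by
      intro e he h hh hhε
      have hs : 0 < r + h := by linarith
      have hnorm_he : ‖h • e‖ = h := by
        rw [norm_smul, he, mul_one, Real.norm_eq_abs, abs_of_pos hh]
      have hmem : x + h • e ∈ ball (z + h • e) (r + h) := by
        rw [mem_ball, dist_add_right]
        linarith
      have hsub : ball z r ⊆ ball (z + h • e) (r + h) := by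
        intro u hu
        rw [mem_ball] at hu ⊢
        calc dist u (z + h • e) ≤ dist u z + dist z (z + h • e) := dist_triangle _ _ _
          _ = dist u z + h := by rw [dist_self_add_right, hnorm_he]
          _ < r + h := by linarith
      have hMuy : 0 < Mu d α f (x + h • e) := by
        apply hnb
        rw [dist_eq_norm, add_sub_cancel_left, hnorm_he]
        exact hhε
      have hint : IntegrableOn f (ball (z + h • e) (r + h)) volume :=
        (hloc.integrableOn_isCompact (isCompact_closedBall _ _)).mono_set
          ball_subset_closedBall
      have hIle : ∫ y in ball z r, f y ≤ ∫ y in ball (z + h • e) (r + h), f y :=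
        setIntegral_mono_set hint (Filter.Eventually.of_forall fun y => hf y)
          (HasSubset.Subset.eventuallyLE hsub)
      have hrdpos : (0:ℝ) < r ^ d * c := by positivity
      have hFI : ∫ y in ball z r, f y = (r ^ d * c) * F := by
        rw [hFdef]; rw [setAvg, hvol z r hr]
        field_simp
      have hnez : ((r+h):ℝ) ^ (d:ℝ) ≠ 0 := (Real.rpow_pos_of_pos hs _).ne'
      have e1 : r ^ (α - d) * r ^ (d:ℝ) = r ^ α := by
        rw [← Real.rpow_add hr]; ring_nf
      have e2 : r ^ (α - d - 1) * r ^ (d:ℝ) = r ^ (α - 1) := by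
        rw [← Real.rpow_add hr]; ring_nf
      have hchain : Mu d α f x - C * h ≤ (r + h) ^ α * setAvg (ball (z + h • e) (r + h)) f := by
        calc Mu d α f x - C * h
            = (r ^ (α - d) + (α - d) * r ^ (α - d - 1) * h) * (r ^ (d:ℝ) * F) := by
              rw [hmax, hCdef]
              linear_combination (-F : ℝ) * e1 - ((α:ℝ) - d) * h * F * e2
          _ ≤ (r + h) ^ (α - (d:ℝ)) * (r ^ (d:ℝ) * F) := by
              apply mul_le_mul_of_nonneg_right
                (rpow_tangent hr hh.le (by linarith))
                (mul_nonneg (Real.rpow_nonneg hr.le _) hF0)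
          _ ≤ (r + h) ^ α * setAvg (ball (z + h • e) (r + h)) f := by
              rw [setAvg, hvol _ _ hs]
              have heq : (r + h) ^ (α - (d:ℝ)) * (r ^ (d:ℝ) * F)
                  = (r + h) ^ α * (((r+h) ^ d * c)⁻¹ * ((r ^ d * c) * F)) := by
                rw [Real.rpow_sub hs, ← Real.rpow_natCast r d, ← Real.rpow_natCast (r+h) d]
                field_simp
              rw [heq]
              apply mul_le_mul_of_nonneg_left _ (Real.rpow_nonneg hs.le α)
              apply mul_le_mul_of_nonneg_left _ (inv_nonneg.mpr (by positivity))
              rw [← hFI]; exact hIle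
      exact hchain.trans (le_Mu hMuy hs hmem)
    -- directional derivative bound
    have hdir : ∀ e : Euc d, ‖e‖ = 1 → -C ≤ L e := by
      intro e he
      have hcurve : HasDerivAt (fun t : ℝ => x + t • e) e 0 := by
        simpa using ((hasDerivAt_id (0:ℝ)).smul_const e).const_add x
      have hdiff' : HasFDerivAt (Mu d α f) L (x + (0:ℝ) • e) := by simpa using hdiff
      have hg : HasDerivAt (fun t : ℝ => Mu d α f (x + t • e)) (L e) 0 :=
        hdiff'.comp_hasDerivAt (f := fun t : ℝ => x + t • e) 0 hcurve
      have hslope := hasDerivAt_iff_tendsto_slope.mp hg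
      have hslope' : Tendsto (slope (fun t : ℝ => Mu d α f (x + t • e)) 0) (𝓝[>] 0) (𝓝 (L e)) :=
        hslope.mono_left (nhdsWithin_mono _ (fun t ht => ne_of_gt ht))
      have hev : ∀ᶠ t in 𝓝[>] (0:ℝ), -C ≤ slope (fun t : ℝ => Mu d α f (x + t • e)) 0 t := by
        filter_upwards [Ioo_mem_nhdsGT_of_mem (Set.mem_Ico.mpr ⟨le_refl 0, hε⟩)] with t ht
        have hkey := key e he t ht.1 ht.2
        rw [slope_def_field, sub_zero, le_div_iff₀ ht.1]
        have hz0 : x + (0:ℝ) • e = x := by simp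
        rw [hz0]
        linarith
      exact ge_of_tendsto hslope' hev
    have hnorm : ‖L‖ ≤ C := by
      apply ContinuousLinearMap.opNorm_le_bound L hC0
      intro v
      rcases eq_or_ne v 0 with rfl | hv
      · simp
      · have hnv : 0 < ‖v‖ := norm_pos_iff.mpr hv
        have he : ‖(‖v‖⁻¹ • v : Euc d)‖ = 1 := by
          rw [norm_smul, norm_inv, norm_norm, inv_mul_cancel₀ hnv.ne']
        have h1 := hdir _ he
        have h2 := hdir (-(‖v‖⁻¹ • v)) (by rwa [norm_neg])
        rw [map_neg] at h2
        have habs : |L (‖v‖⁻¹ • v)| ≤ C := abs_le.mpr ⟨h1, by linarith⟩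
        have hv' : L v = ‖v‖ * L (‖v‖⁻¹ • v) := by
          rw [ContinuousLinearMap.map_smul, smul_eq_mul]
          field_simp
        calc ‖L v‖ = ‖v‖ * |L (‖v‖⁻¹ • v)| := by
              rw [Real.norm_eq_abs, hv', abs_mul, abs_of_nonneg hnv.le]
          _ ≤ ‖v‖ * C := mul_le_mul_of_nonneg_left habs hnv.le
          _ = C * ‖v‖ := mul_comm _ _
    refine ⟨hnorm, fun hxb => ?_⟩
    have hmin : IsLocalMin (Mu d α f) x := by
      have hb : ball z r ∩ ball x ε ∈ 𝓝 x :=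
        inter_mem (isOpen_ball.mem_nhds hxb) (ball_mem_nhds x hε)
      filter_upwards [hb] with y hy
      rw [hmax]
      exact le_Mu (hnb y (mem_ball.mp hy.2)) hr hy.1
    exact hmin.hasFDerivAt_eq_zero hdiff
end
end

section
/- Comparability of optimal balls with dyadic cubes: let 0 < α < d, f ∈ L^1_loc(ℝ^d) nonnegative, and let B ∈ B_α be an optimal ball for the (centered or uncentered) fractional maximal operator M_α. Fix a dyadic grid system in which B is contained in a dyadic cube Q_B with ℓ(Q_B) ≤ C_d r(B). Then f_{Q_B} ≍_d f_B and ℓ(Q_B) ≍_d r(B); moreover, for every cube P ⊇ Q_B, ℓ(P)^α f_P ≤ C_{d,α} ℓ(Q_B)^α f_{Q_B}. -/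
open MeasureTheory Metric Set Filter

noncomputable section

/-- An axis-parallel half-open cube with lower corner `a` and side length `s`. -/
def cubeA (d : ℕ) (a : Euc d) (s : ℝ) : Set (Euc d) :=
  {y | ∀ i, a i ≤ y i ∧ y i < a i + s}

/-- The centered fractional Hardy–Littlewood maximal function. -/
def Mc (d : ℕ) (α : ℝ) (f : Euc d → ℝ) (x : Euc d) : ℝ :=
  sSup {v | ∃ r : ℝ, 0 < r ∧ v = r ^ α * setAvg (ball x r) f}

/-- `ball z r` is an optimal ball for the centered fractional maximal operator. -/
def memBc (d : ℕ) (α : ℝ) (f : Euc d → ℝ) (z : Euc d) (r : ℝ) : Prop :=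
  0 < r ∧ r ^ α * setAvg (ball z r) f = Mc d α f z ∧
    ∀ r' : ℝ, r < r' → r' ^ α * setAvg (ball z r') f < Mc d α f z

/-- `ball z r` is an optimal ball for the uncentered fractional maximal operator. -/
def memBu (d : ℕ) (α : ℝ) (f : Euc d → ℝ) (z : Euc d) (r : ℝ) : Prop :=
  0 < r ∧ ∃ x ∈ closure (ball z r),
    r ^ α * setAvg (ball z r) f = Mu d α f x ∧
    ∀ (z' : Euc d) (r' : ℝ), ball z r ⊂ ball z' r' →
      r' ^ α * setAvg (ball z' r') f < Mu d α f x

section helpers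

variable {d : ℕ}

lemma euc_abs_sub_le (x y : Euc d) (i : Fin d) : |x i - y i| ≤ dist x y := by
  rw [EuclideanSpace.dist_eq]
  have h1 : |x i - y i| = Real.sqrt (dist (x i) (y i) ^ 2) := by
    rw [Real.sqrt_sq dist_nonneg, Real.dist_eq]
  rw [h1]
  apply Real.sqrt_le_sqrt
  exact Finset.single_le_sum (f := fun j => dist (x j) (y j) ^ 2)
    (fun j _ => by positivity) (Finset.mem_univ i)

lemma euc_dist_le {x y : Euc d} {u : ℝ} (hu : 0 ≤ u) (h : ∀ i, |x i - y i| ≤ u) :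
    dist x y ≤ Real.sqrt d * u := by
  rw [EuclideanSpace.dist_eq]
  have h1 : ∑ i, dist (x i) (y i) ^ 2 ≤ (d : ℝ) * u ^ 2 := by
    calc ∑ i, dist (x i) (y i) ^ 2 ≤ ∑ _i : Fin d, u ^ 2 := by
          apply Finset.sum_le_sum
          intro i _
          have := h i
          rw [Real.dist_eq]
          nlinarith [abs_nonneg (x i - y i)]
      _ = (d : ℝ) * u ^ 2 := by simp [Finset.sum_const, Finset.card_univ]
  calc Real.sqrt (∑ i, dist (x i) (y i) ^ 2) ≤ Real.sqrt ((d : ℝ) * u ^ 2) :=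
        Real.sqrt_le_sqrt h1
    _ = Real.sqrt d * u := by
        rw [Real.sqrt_mul (Nat.cast_nonneg d), Real.sqrt_sq hu]

lemma cubeA_measurable (a : Euc d) (s : ℝ) : MeasurableSet (cubeA d a s) := by
  have : cubeA d a s = ⋂ i, ((fun y : Euc d => y i) ⁻¹' Ico (a i) (a i + s)) := by
    ext y; simp [cubeA, Set.mem_iInter, Set.mem_Ico]
  rw [this]
  refine MeasurableSet.iInter fun i => ?_
  have hm : Measurable fun y : Euc d => y i :=
    (EuclideanSpace.proj i : Euc d →L[ℝ] ℝ).continuous.measurable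
  exact hm measurableSet_Ico

lemma cubeA_subset_closedBall {a : Euc d} {u : ℝ} (hu : 0 ≤ u) {x : Euc d}
    (hx : x ∈ cubeA d a u) : cubeA d a u ⊆ closedBall x (Real.sqrt d * u) := by
  intro y hy
  rw [mem_closedBall]
  apply euc_dist_le hu
  intro i
  have h1 := hx i
  have h2 := hy i
  rw [abs_le]
  constructor <;> nlinarith [h1.1, h1.2, h2.1, h2.2]

lemma ball_subset_cubeA {a c : Euc d} {u : ℝ} (hc : ∀ i, c i = a i + u / 2) :
    ball c (u / 2) ⊆ cubeA d a u := by
  intro y hy i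
  have h1 := euc_abs_sub_le y c i
  rw [mem_ball] at hy
  have h2 : |y i - c i| < u / 2 := lt_of_le_of_lt h1 hy
  rw [hc i] at h2
  rw [abs_lt] at h2
  constructor <;> [linarith [h2.1]; linarith [h2.2]]

lemma exists_center (a : Euc d) (u : ℝ) : ∃ c : Euc d, ∀ i, c i = a i + u / 2 :=
  ⟨(WithLp.equiv 2 (∀ _ : Fin d, ℝ)).symm (fun i => a i + u / 2), fun _ => rfl⟩

lemma vol_ball_toReal (x : Euc d) {R : ℝ} (hR : 0 < R) :
    (volume (ball x R)).toReal = R ^ d * (volume (ball (0 : Euc d) 1)).toReal := by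
  rw [Measure.addHaar_ball_of_pos volume x hR, ENNReal.toReal_mul,
    ENNReal.toReal_ofReal (by positivity), finrank_euclideanSpace_fin]

lemma vol_closedBall_toReal (x : Euc d) {R : ℝ} (hR : 0 ≤ R) :
    (volume (closedBall x R)).toReal = R ^ d * (volume (ball (0 : Euc d) 1)).toReal := by
  rw [Measure.addHaar_closedBall volume x hR, ENNReal.toReal_mul,
    ENNReal.toReal_ofReal (by positivity), finrank_euclideanSpace_fin]

lemma inv_mul_le_inv_mul' {x y I J : ℝ} (hy : 0 < y) (hxy : y ≤ x) (hI : 0 ≤ I)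
    (hIJ : I ≤ J) : x⁻¹ * I ≤ y⁻¹ * J := by
  have hx : 0 < x := lt_of_lt_of_le hy hxy
  have h1 : x⁻¹ ≤ y⁻¹ := by
    rw [inv_le_inv₀ hx hy]; exact hxy
  exact mul_le_mul h1 hIJ hI (by positivity)

lemma avg_le_helper {c X Y I J : ℝ} (hY : 0 < Y) (hc : 0 < c) (hI : 0 ≤ I)
    (hIJ : I ≤ J) (hXY : Y ≤ c * X) : c⁻¹ * (X⁻¹ * I) ≤ Y⁻¹ * J := by
  have h0 : c⁻¹ * (X⁻¹ * I) = (c * X)⁻¹ * I := by rw [mul_inv, mul_assoc]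
  rw [h0]
  exact inv_mul_le_inv_mul' hY hXY hI hIJ

end helpers

set_option maxHeartbeats 1000000 in
theorem stmt18 (d : ℕ) (α : ℝ) (hα : 0 < α) (hαd : α < d)
    (K : ℝ) (hK : 0 < K) :
    ∃ C : ℝ, 0 < C ∧
      ∀ (f : Euc d → ℝ), 0 ≤ f → MeasureTheory.LocallyIntegrable f volume →
      ∀ (z : Euc d) (r : ℝ),
        (memBc d α f z r ∨ memBu d α f z r) →
        ∀ (a : Euc d) (s : ℝ), 0 < s →
          ball z r ⊆ cubeA d a s → s ≤ K * r →
          (C⁻¹ * setAvg (ball z r) f ≤ setAvg (cubeA d a s) f ∧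
           setAvg (cubeA d a s) f ≤ C * setAvg (ball z r) f ∧
           C⁻¹ * r ≤ s ∧ s ≤ C * r) ∧
          ∀ (b : Euc d) (t : ℝ), 0 < t → cubeA d a s ⊆ cubeA d b t →
            t ^ α * setAvg (cubeA d b t) f ≤ C * (s ^ α * setAvg (cubeA d a s) f) := by
  have hd0 : 0 < d := by
    have h : (0 : ℝ) < d := hα.trans hαd
    exact_mod_cast h
  set sd : ℝ := Real.sqrt d with hsd_def
  have hsd1 : (1 : ℝ) ≤ sd := by
    rw [hsd_def, show (1:ℝ) = Real.sqrt 1 by simp]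
    exact Real.sqrt_le_sqrt (by exact_mod_cast hd0)
  have hsd0 : (0 : ℝ) < sd := lt_of_lt_of_le one_pos hsd1
  set c1 : ℝ := (sd * K) ^ d with hc1
  set c2 : ℝ := (4 * sd) ^ d with hc2
  have hc1p : 0 < c1 := by positivity
  have hc2p : 0 < c2 := by positivity
  set C : ℝ := max (max (sd + K) (c1 + c2)) (c2 * (c1 * sd ^ α)) with hC_def
  have hCsdK : sd + K ≤ C := le_max_of_le_left (le_max_left _ _)
  have hC : 0 < C := lt_of_lt_of_le (by positivity) hCsdK
  have hCc1 : c1 ≤ C := le_max_of_le_left ((le_max_right _ _).trans' (by linarith))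
  have hCc2 : c2 ≤ C := le_max_of_le_left ((le_max_right _ _).trans' (by linarith))
  have hCc3 : c2 * (c1 * sd ^ α) ≤ C := le_max_right _ _
  have hCsd : sd ≤ C := le_trans (by linarith) hCsdK
  have hCK : K ≤ C := le_trans (by linarith) hCsdK
  refine ⟨C, hC, ?_⟩
  intro f hf0 hfi z r hopt a s hs hsub hsK
  have hr : 0 < r := hopt.elim (fun h => h.1) (fun h => h.1)
  set v : ℝ := (volume (ball (0 : Euc d) 1)).toReal with hv_def
  have hv : 0 < v :=
    ENNReal.toReal_pos (measure_ball_pos volume 0 one_pos).ne' measure_ball_lt_top.ne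
  -- monotonicity from optimality
  have hmono : ∀ R : ℝ, r < R →
      R ^ α * setAvg (ball z R) f ≤ r ^ α * setAvg (ball z r) f := by
    intro R hR
    rcases hopt with h | h
    · exact (h.2.2 R hR).le.trans h.2.1.ge
    · obtain ⟨hr', x, hx, heq, hlt⟩ := h
      have hne : ball z r ≠ ball z R := by
        intro hball
        have h1 : (volume (ball z r)).toReal = (volume (ball z R)).toReal := by rw [hball]
        rw [vol_ball_toReal z hr, vol_ball_toReal z (hr.trans hR)] at h1
        have h2 : r ^ d < R ^ d := pow_lt_pow_left₀ hR hr.le hd0.ne'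
        nlinarith
      have hss : ball z r ⊂ ball z R :=
        (Set.ssubset_iff_subset_ne).mpr ⟨ball_subset_ball hR.le, hne⟩
      exact (hlt z R hss).le.trans heq.ge
  have hza : z ∈ cubeA d a s := hsub (mem_ball_self hr)
  have hQcb : cubeA d a s ⊆ closedBall z (sd * s) := cubeA_subset_closedBall hs.le hza
  have hfiQ : IntegrableOn f (cubeA d a s) volume :=
    (hfi.integrableOn_isCompact (isCompact_closedBall z (sd * s))).mono_set hQcb
  have hfiB : ∀ (x : Euc d) (R : ℝ), IntegrableOn f (ball x R) volume := fun x R =>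
    (hfi.integrableOn_isCompact (isCompact_closedBall x R)).mono_set ball_subset_closedBall
  have hI0 : ∀ S : Set (Euc d), 0 ≤ ∫ y in S, f y := fun S => integral_nonneg hf0
  have havg0 : ∀ S : Set (Euc d), 0 ≤ setAvg S f := fun S =>
    mul_nonneg (inv_nonneg.mpr ENNReal.toReal_nonneg) (hI0 S)
  have hvolB : (volume (ball z r)).toReal = r ^ d * v := vol_ball_toReal z hr
  -- facts about cubes containing z
  have cube_facts : ∀ (b : Euc d) (t : ℝ), 0 < t → z ∈ cubeA d b t →
      0 < (volume (cubeA d b t)).toReal ∧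
      (t / 2) ^ d * v ≤ (volume (cubeA d b t)).toReal ∧
      (volume (cubeA d b t)).toReal ≤ (sd * t) ^ d * v := by
    intro b t ht hzb
    obtain ⟨c, hc⟩ := exists_center b t
    have hsub1 : ball c (t / 2) ⊆ cubeA d b t := ball_subset_cubeA hc
    have hsub2 : cubeA d b t ⊆ closedBall z (sd * t) := cubeA_subset_closedBall ht.le hzb
    have h1 : volume (cubeA d b t) ≤ volume (closedBall z (sd * t)) := measure_mono hsub2
    have hne : volume (cubeA d b t) ≠ ⊤ :=
      ne_top_of_le_ne_top measure_closedBall_lt_top.ne h1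
    have hub : (volume (cubeA d b t)).toReal ≤ (sd * t) ^ d * v := by
      rw [← vol_closedBall_toReal z (by positivity : (0:ℝ) ≤ sd * t)]
      exact ENNReal.toReal_mono measure_closedBall_lt_top.ne h1
    have hlb : (t / 2) ^ d * v ≤ (volume (cubeA d b t)).toReal := by
      rw [← vol_ball_toReal c (by positivity : (0:ℝ) < t / 2)]
      exact ENNReal.toReal_mono hne (measure_mono hsub1)
    exact ⟨lt_of_lt_of_le (by positivity) hlb, hlb, hub⟩
  have r_le : ∀ (b : Euc d) (t : ℝ), 0 < t → ball z r ⊆ cubeA d b t → r ≤ sd * t := by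
    intro b t ht hsub'
    have hz' : z ∈ cubeA d b t := hsub' (mem_ball_self hr)
    obtain ⟨hQpos, hQlb, hQub⟩ := cube_facts b t ht hz'
    have hsub2 : cubeA d b t ⊆ closedBall z (sd * t) := cubeA_subset_closedBall ht.le hz'
    have h1 : (volume (ball z r)).toReal ≤ (volume (closedBall z (sd * t))).toReal :=
      ENNReal.toReal_mono measure_closedBall_lt_top.ne
        (measure_mono (hsub'.trans hsub2))
    rw [vol_ball_toReal z hr, vol_closedBall_toReal z (by positivity : (0:ℝ) ≤ sd * t)] at h1
    have h2 : r ^ d ≤ (sd * t) ^ d := by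
      by_contra hcon
      push_neg at hcon
      nlinarith
    exact le_of_pow_le_pow_left₀ hd0.ne' (by positivity) h2
  obtain ⟨hQpos, hQlb, hQub⟩ := cube_facts a s hs hza
  have hIBQ : ∫ y in ball z r, f y ≤ ∫ y in cubeA d a s, f y :=
    setIntegral_mono_set hfiQ (Eventually.of_forall fun x => hf0 x) hsub.eventuallyLE
  -- key lower bound on cube average with constant c1
  have hc1Q : c1⁻¹ * setAvg (ball z r) f ≤ setAvg (cubeA d a s) f := by
    unfold setAvg
    rw [hvolB]
    apply avg_le_helper hQpos hc1p (hI0 _) hIBQ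
    calc (volume (cubeA d a s)).toReal ≤ (sd * s) ^ d * v := hQub
      _ ≤ c1 * (r ^ d * v) := by
          have h3 : (sd * s) ^ d ≤ (sd * K) ^ d * r ^ d := by
            rw [← mul_pow]
            apply pow_le_pow_left₀ (by positivity)
            calc sd * s ≤ sd * (K * r) := mul_le_mul_of_nonneg_left hsK hsd0.le
              _ = sd * K * r := by ring
          calc (sd * s) ^ d * v ≤ ((sd * K) ^ d * r ^ d) * v :=
                mul_le_mul_of_nonneg_right h3 hv.le
            _ = c1 * (r ^ d * v) := by rw [hc1]; ring
  have hrs : r ≤ sd * s := r_le a s hs hsub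
  -- goal 1a
  have g1a : C⁻¹ * setAvg (ball z r) f ≤ setAvg (cubeA d a s) f := by
    refine le_trans (mul_le_mul_of_nonneg_right ?_ (havg0 _)) hc1Q
    rw [inv_le_inv₀ hC hc1p]
    exact hCc1
  -- goal 1b
  have g1b : setAvg (cubeA d a s) f ≤ C * setAvg (ball z r) f := by
    set R : ℝ := sd * s + r with hRdef
    have hrR : r < R := lt_add_of_pos_left r (by positivity)
    have hRpos : 0 < R := hr.trans hrR
    have havgR_le : setAvg (ball z R) f ≤ setAvg (ball z r) f := by
      have h1 := hmono R hrR
      have h2 : r ^ α ≤ R ^ α := Real.rpow_le_rpow hr.le hrR.le hα.le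
      have h3 : R ^ α * setAvg (ball z R) f ≤ R ^ α * setAvg (ball z r) f :=
        h1.trans (mul_le_mul_of_nonneg_right h2 (havg0 _))
      exact le_of_mul_le_mul_left h3 (Real.rpow_pos_of_pos hRpos α)
    have hIQR : ∫ y in cubeA d a s, f y ≤ ∫ y in ball z R, f y := by
      apply setIntegral_mono_set (hfiB z R) (Eventually.of_forall fun x => hf0 x)
      exact (hQcb.trans (closedBall_subset_ball (by linarith))).eventuallyLE
    have hIR : ∫ y in ball z R, f y = (R ^ d * v) * setAvg (ball z R) f := by
      unfold setAvg
      rw [vol_ball_toReal z hRpos]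
      field_simp
      rw [← hv_def, mul_div_assoc, div_self hv.ne', mul_one]
    have hRd : R ^ d * v ≤ c2 * ((s / 2) ^ d * v) := by
      have hRle : R ≤ 2 * sd * s := by rw [hRdef]; linarith
      have h4 : R ^ d ≤ (2 * sd * s) ^ d := pow_le_pow_left₀ hRpos.le hRle d
      have h5 : (2 * sd * s) ^ d = c2 * (s / 2) ^ d := by
        rw [hc2, ← mul_pow]; ring_nf
      calc R ^ d * v ≤ (2 * sd * s) ^ d * v := mul_le_mul_of_nonneg_right h4 hv.le
        _ = c2 * ((s / 2) ^ d * v) := by rw [h5]; ring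
    have hX : ((s / 2) ^ d * v) ≠ 0 := by positivity
    calc setAvg (cubeA d a s) f
        = (volume (cubeA d a s)).toReal⁻¹ * ∫ y in cubeA d a s, f y := by simp only [setAvg]
      _ ≤ ((s / 2) ^ d * v)⁻¹ * ((R ^ d * v) * setAvg (ball z R) f) :=
          inv_mul_le_inv_mul' (by positivity) hQlb (hI0 _) (hIQR.trans_eq hIR)
      _ ≤ ((s / 2) ^ d * v)⁻¹ * ((c2 * ((s / 2) ^ d * v)) * setAvg (ball z r) f) := by
          apply mul_le_mul_of_nonneg_left _ (inv_nonneg.mpr (by positivity))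
          exact mul_le_mul hRd havgR_le (havg0 _) (by positivity)
      _ = c2 * setAvg (ball z r) f := by
          field_simp
      _ ≤ C * setAvg (ball z r) f := mul_le_mul_of_nonneg_right hCc2 (havg0 _)
  -- goal 1c
  have g1c : C⁻¹ * r ≤ s := by
    rw [inv_mul_le_iff₀ hC]
    calc r ≤ sd * s := hrs
      _ ≤ C * s := mul_le_mul_of_nonneg_right hCsd hs.le
  have g1d : s ≤ C * r := hsK.trans (mul_le_mul_of_nonneg_right hCK hr.le)
  refine ⟨⟨g1a, g1b, g1c, g1d⟩, ?_⟩
  -- part 2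
  intro b t ht hQP
  have hsubP : ball z r ⊆ cubeA d b t := hsub.trans hQP
  have hzP : z ∈ cubeA d b t := hsubP (mem_ball_self hr)
  obtain ⟨hPpos, hPlb, hPub⟩ := cube_facts b t ht hzP
  have hrt : r ≤ sd * t := r_le b t ht hsubP
  set R' : ℝ := sd * t + r with hR'def
  have hrR' : r < R' := lt_add_of_pos_left r (by positivity)
  have hR'pos : 0 < R' := hr.trans hrR'
  have hPR' : cubeA d b t ⊆ ball z R' :=
    (cubeA_subset_closedBall ht.le hzP).trans (closedBall_subset_ball (by linarith))
  have hIPR' : ∫ y in cubeA d b t, f y ≤ ∫ y in ball z R', f y :=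
    setIntegral_mono_set (hfiB z R') (Eventually.of_forall fun x => hf0 x) hPR'.eventuallyLE
  have hIR' : ∫ y in ball z R', f y = (R' ^ d * v) * setAvg (ball z R') f := by
    unfold setAvg
    rw [vol_ball_toReal z hR'pos]
    field_simp
    rw [← hv_def, mul_div_assoc, div_self hv.ne', mul_one]
  have htR'le : t ≤ R' := by
    have h6 : t ≤ sd * t := le_mul_of_one_le_left ht.le hsd1
    linarith
  have htR' : t ^ α ≤ R' ^ α := Real.rpow_le_rpow ht.le htR'le hα.le
  have hstep : t ^ α * setAvg (ball z R') f ≤ r ^ α * setAvg (ball z r) f :=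
    (mul_le_mul_of_nonneg_right htR' (havg0 _)).trans (hmono R' hrR')
  have hR'd : R' ^ d * v ≤ c2 * ((t / 2) ^ d * v) := by
    have hRle : R' ≤ 2 * sd * t := by rw [hR'def]; linarith
    have h4 : R' ^ d ≤ (2 * sd * t) ^ d := pow_le_pow_left₀ hR'pos.le hRle d
    have h5 : (2 * sd * t) ^ d = c2 * (t / 2) ^ d := by
      rw [hc2, ← mul_pow]; ring_nf
    calc R' ^ d * v ≤ (2 * sd * t) ^ d * v := mul_le_mul_of_nonneg_right h4 hv.le
      _ = c2 * ((t / 2) ^ d * v) := by rw [h5]; ring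
  have hvolc2 : (volume (cubeA d b t)).toReal⁻¹ * (R' ^ d * v) ≤ c2 := by
    have hX : ((t / 2) ^ d * v) ≠ 0 := by positivity
    calc (volume (cubeA d b t)).toReal⁻¹ * (R' ^ d * v)
        ≤ ((t / 2) ^ d * v)⁻¹ * (c2 * ((t / 2) ^ d * v)) :=
          inv_mul_le_inv_mul' (by positivity) hPlb (by positivity) hR'd
      _ = c2 := by field_simp
  have havgB_le : setAvg (ball z r) f ≤ c1 * setAvg (cubeA d a s) f :=
    (inv_mul_le_iff₀ hc1p).mp hc1Q
  have hrα : r ^ α ≤ sd ^ α * s ^ α := by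
    calc r ^ α ≤ (sd * s) ^ α := Real.rpow_le_rpow hr.le hrs hα.le
      _ = sd ^ α * s ^ α := Real.mul_rpow hsd0.le hs.le
  calc t ^ α * setAvg (cubeA d b t) f
      = t ^ α * ((volume (cubeA d b t)).toReal⁻¹ * ∫ y in cubeA d b t, f y) := by
        simp only [setAvg]
    _ ≤ t ^ α * ((volume (cubeA d b t)).toReal⁻¹ * ((R' ^ d * v) * setAvg (ball z R') f)) := by
        apply mul_le_mul_of_nonneg_left _ (Real.rpow_nonneg ht.le α)
        exact mul_le_mul_of_nonneg_left (hIPR'.trans_eq hIR')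
          (inv_nonneg.mpr ENNReal.toReal_nonneg)
    _ = ((volume (cubeA d b t)).toReal⁻¹ * (R' ^ d * v)) * (t ^ α * setAvg (ball z R') f) := by
        ring
    _ ≤ c2 * (r ^ α * setAvg (ball z r) f) := by
        apply mul_le_mul hvolc2 hstep _ hc2p.le
        exact mul_nonneg (Real.rpow_nonneg ht.le α) (havg0 _)
    _ ≤ c2 * ((sd ^ α * s ^ α) * (c1 * setAvg (cubeA d a s) f)) := by
        apply mul_le_mul_of_nonneg_left _ hc2p.le
        apply mul_le_mul hrα havgB_le (havg0 _) (by positivity)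
    _ = (c2 * (c1 * sd ^ α)) * (s ^ α * setAvg (cubeA d a s) f) := by ring
    _ ≤ C * (s ^ α * setAvg (cubeA d a s) f) :=
        mul_le_mul_of_nonneg_right hCc3
          (mul_nonneg (Real.rpow_nonneg hs.le α) (havg0 _))
end
end
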